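/- Let Y be a CAT(κ) space and η₀, η₁ : [0,1] → Y rectifiable curves with d_Y(η₀(a), η₁(a)) < R_κ for all a (automatic if κ ≤ 0). Let γ_a be the geodesic from η₀(a) to η₁(a) parametrized proportionally to arclength, and f(a,t) := γ_a(t) the ruled map on Q = [0,1]×[0,1]. Then f is length-minimizing relative to ∂Q: every continuous g : Q → Y agreeing with f on ∂Q and satisfying ℓ_Y(g∘γ) ≤ ℓ_Y(f∘γ) for all curves γ in Q coincides with f. -/

import Mathlib

open Set Metric ENNReal unitInterval

noncomputable section

/-- The length of a curve parametrized by the unit interval, as total variation. -/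
def curveELength {Y : Type*} [PseudoEMetricSpace Y] (c : unitInterval → Y) : ℝ≥0∞ :=
  eVariationOn c Set.univ

/-- The length pseudodistance induced by a map `f : X → Y`: the infimum of the lengths of
`f ∘ γ` over all curves `γ` joining the two points (`⊤` if there is no such curve). -/
def lengthPd {X Y : Type*} [TopologicalSpace X] [PseudoEMetricSpace Y]
    (f : X → Y) (x z : X) : ℝ≥0∞ :=
  ⨅ γ : Path x z, curveELength (fun t => f (γ t))

/-- `f` is length-connected: the induced length pseudodistance is everywhere finite. -/
def LengthConnected {X Y : Type*} [TopologicalSpace X] [PseudoEMetricSpace Y]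
    (f : X → Y) : Prop :=
  ∀ x z : X, lengthPd f x z ≠ ⊤

/-- The connecting pseudodistance induced by `f`: infimum of `diam (f '' C)` over connected
sets `C` containing both points. -/
def connPd {X Y : Type*} [TopologicalSpace X] [PseudoEMetricSpace Y]
    (f : X → Y) (x z : X) : ℝ≥0∞ :=
  ⨅ C : {C : Set X // IsConnected C ∧ x ∈ C ∧ z ∈ C}, EMetric.diam (f '' (C : Set X))

/-- `g` does not increase the length of any curve, compared with `f`. -/
def IsShorter {X Y : Type*} [TopologicalSpace X] [PseudoEMetricSpace Y]
    (f g : X → Y) : Prop :=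
  ∀ c : C(unitInterval, X), curveELength (fun t => g (c t)) ≤ curveELength (fun t => f (c t))

/-- `f` is length-minimizing relative to `Z`: any continuous competitor agreeing with `f`
on `Z` and not increasing the length of any curve in fact preserves all curve lengths. -/
def LengthMinimizing {X Y : Type*} [TopologicalSpace X] [PseudoEMetricSpace Y]
    (f : X → Y) (Z : Set X) : Prop :=
  Continuous f ∧ ∀ g : X → Y, Continuous g → Set.EqOn f g Z → IsShorter f g →
    ∀ c : C(unitInterval, X), curveELength (fun t => g (c t)) = curveELength (fun t => f (c t))

/-- `γ : ℝ → Y` is a unit-speed geodesic from `x` to `y` (on `[0, dist x y]`). -/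
def IsGeodesicParam {Y : Type*} [MetricSpace Y] (γ : ℝ → Y) (x y : Y) : Prop :=
  γ 0 = x ∧ γ (dist x y) = y ∧
    ∀ s ∈ Set.Icc (0:ℝ) (dist x y), ∀ t ∈ Set.Icc (0:ℝ) (dist x y),
      dist (γ s) (γ t) = |s - t|

/-- A geodesic metric space: any two points are joined by a geodesic. -/
def IsGeodesicSpace (Y : Type*) [MetricSpace Y] : Prop :=
  ∀ x y : Y, ∃ γ : ℝ → Y, IsGeodesicParam γ x y

/-- The diameter `R_κ` of the model surface `M_κ`: `π/√κ` for `κ > 0`, `∞` otherwise. -/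
def modelDiam (κ : ℝ) : ℝ≥0∞ :=
  if κ ≤ 0 then ⊤ else ENNReal.ofReal (Real.pi / Real.sqrt κ)

/-- Cosine of the angle opposite the side of length `c` in a triangle of side lengths
`a`, `b`, `c` in the model plane of curvature `κ` (law of cosines). -/
def modelCosAngle (κ a b c : ℝ) : ℝ :=
  if κ = 0 then (a ^ 2 + b ^ 2 - c ^ 2) / (2 * a * b)
  else if 0 < κ then
    (Real.cos (Real.sqrt κ * c) - Real.cos (Real.sqrt κ * a) * Real.cos (Real.sqrt κ * b)) /
      (Real.sin (Real.sqrt κ * a) * Real.sin (Real.sqrt κ * b))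
  else
    (Real.cosh (Real.sqrt (-κ) * a) * Real.cosh (Real.sqrt (-κ) * b) -
        Real.cosh (Real.sqrt (-κ) * c)) /
      (Real.sinh (Real.sqrt (-κ) * a) * Real.sinh (Real.sqrt (-κ) * b))

/-- Distance in the model plane of curvature `κ` between the endpoints of two segments of
lengths `a` and `b` emanating from a common vertex at an angle with cosine `cosθ`. -/
def modelSideLength (κ a b cosθ : ℝ) : ℝ :=
  if κ = 0 then Real.sqrt (a ^ 2 + b ^ 2 - 2 * a * b * cosθ)
  else if 0 < κ then
    Real.arccos (Real.cos (Real.sqrt κ * a) * Real.cos (Real.sqrt κ * b) +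
      Real.sin (Real.sqrt κ * a) * Real.sin (Real.sqrt κ * b) * cosθ) / Real.sqrt κ
  else
    -- `Real.log (x + √(x² - 1))` is the inverse hyperbolic cosine `arcosh x`
    Real.log ((Real.cosh (Real.sqrt (-κ) * a) * Real.cosh (Real.sqrt (-κ) * b) -
        Real.sinh (Real.sqrt (-κ) * a) * Real.sinh (Real.sqrt (-κ) * b) * cosθ) +
      Real.sqrt ((Real.cosh (Real.sqrt (-κ) * a) * Real.cosh (Real.sqrt (-κ) * b) -
        Real.sinh (Real.sqrt (-κ) * a) * Real.sinh (Real.sqrt (-κ) * b) * cosθ) ^ 2 - 1)) /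
      Real.sqrt (-κ)

/-- `Y` is a CAT(κ) space: complete, geodesic, and every geodesic triangle of perimeter
`< 2 R_κ` satisfies the point-side comparison with its model triangle in `M_κ`. -/
def IsCATSpace (κ : ℝ) (Y : Type*) [MetricSpace Y] : Prop :=
  CompleteSpace Y ∧ IsGeodesicSpace Y ∧
    ∀ p q r : Y, ∀ γ : ℝ → Y, IsGeodesicParam γ p q →
      ENNReal.ofReal (dist p q + dist q r + dist r p) < 2 * modelDiam κ →
      ∀ s ∈ Set.Icc (0:ℝ) (dist p q),
        dist (γ s) r ≤
          modelSideLength κ s (dist p r) (modelCosAngle κ (dist p q) (dist p r) (dist q r))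

/-- A set is geodesically convex if every geodesic between its points stays inside it. -/
def IsGeodesicallyConvex {Y : Type*} [MetricSpace Y] (K : Set Y) : Prop :=
  ∀ x ∈ K, ∀ y ∈ K, ∀ γ : ℝ → Y, IsGeodesicParam γ x y →
    ∀ t ∈ Set.Icc (0:ℝ) (dist x y), γ t ∈ K

/-- A finite graph (connected finite one-dimensional CW complex) structure on a
topological space `Γ`: finitely many edges, injective away from endpoints, with
endpoints in a finite vertex set, covering `Γ`. -/
structure FiniteGraphStruct (Γ : Type*) [TopologicalSpace Γ] where
  n : ℕ
  edge : Fin n → C(unitInterval, Γ)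
  vertices : Set Γ
  vertices_finite : vertices.Finite
  endpoints_mem : ∀ i, edge i 0 ∈ vertices ∧ edge i 1 ∈ vertices
  inj_on : ∀ i, Set.InjOn (edge i) {t : unitInterval | t ≠ 0 ∧ t ≠ 1}
  cover : ∀ x : Γ, x ∈ vertices ∨ ∃ i t, edge i t = x

end

section AuxLemmas

open Real in
private lemma aux_sideLength_self (κ b : ℝ) : modelSideLength κ b b 1 = 0 := by
  unfold modelSideLength
  split_ifs with h0 h1
  · rw [show b ^ 2 + b ^ 2 - 2 * b * b * 1 = 0 by ring, Real.sqrt_zero]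
  · rw [show Real.cos (Real.sqrt κ * b) * Real.cos (Real.sqrt κ * b) +
      Real.sin (Real.sqrt κ * b) * Real.sin (Real.sqrt κ * b) * 1
      = Real.sin (Real.sqrt κ * b) ^ 2 + Real.cos (Real.sqrt κ * b) ^ 2 by ring,
      Real.sin_sq_add_cos_sq, Real.arccos_one, zero_div]
  · rw [show Real.cosh (Real.sqrt (-κ) * b) * Real.cosh (Real.sqrt (-κ) * b) -
      Real.sinh (Real.sqrt (-κ) * b) * Real.sinh (Real.sqrt (-κ) * b) * 1
      = Real.cosh (Real.sqrt (-κ) * b) ^ 2 - Real.sinh (Real.sqrt (-κ) * b) ^ 2 by ring,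
      Real.cosh_sq_sub_sinh_sq]
    norm_num

private lemma aux_cosAngle_deg (κ D t : ℝ) (hD : 0 < D) (ht0 : 0 < t) (ht1 : t < 1)
    (hκ : 0 < κ → Real.sqrt κ * D < Real.pi) :
    modelCosAngle κ D (t * D) ((1 - t) * D) = 1 := by
  unfold modelCosAngle
  split_ifs with h0 h1
  · rw [div_eq_one_iff_eq (by positivity)]; ring
  · have hsx : 0 < Real.sqrt κ := Real.sqrt_pos.2 h1
    have hx : 0 < Real.sqrt κ * D := by positivity
    have hxπ := hκ h1
    have hy : 0 < Real.sqrt κ * (t * D) := by positivity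
    have hyx : Real.sqrt κ * (t * D) < Real.sqrt κ * D := by nlinarith
    have hsinx : 0 < Real.sin (Real.sqrt κ * D) := Real.sin_pos_of_pos_of_lt_pi hx hxπ
    have hsiny : 0 < Real.sin (Real.sqrt κ * (t * D)) :=
      Real.sin_pos_of_pos_of_lt_pi hy (hyx.trans hxπ)
    rw [show Real.sqrt κ * ((1 - t) * D) = Real.sqrt κ * D - Real.sqrt κ * (t * D) by ring,
      Real.cos_sub]
    rw [show ∀ x y u v : ℝ, x * y + u * v - x * y = u * v from fun _ _ _ _ => by ring]
    exact div_self (by positivity)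
  · have hκneg : κ < 0 := lt_of_le_of_ne (not_lt.1 h1) h0
    have hsx : 0 < Real.sqrt (-κ) := Real.sqrt_pos.2 (by linarith)
    have hx : 0 < Real.sinh (Real.sqrt (-κ) * D) := Real.sinh_pos_iff.2 (by positivity)
    have hy : 0 < Real.sinh (Real.sqrt (-κ) * (t * D)) := Real.sinh_pos_iff.2 (by positivity)
    rw [show Real.sqrt (-κ) * ((1 - t) * D) = Real.sqrt (-κ) * D - Real.sqrt (-κ) * (t * D) by
      ring, Real.cosh_sub]
    rw [show ∀ x y u v : ℝ, x * y - (x * y - u * v) = u * v from fun _ _ _ _ => by ring]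
    exact div_self (by positivity)

private lemma aux_curveELength_le {Y : Type*} [MetricSpace Y] (h : unitInterval → Y) (C : ℝ)
    (hl : ∀ s t : unitInterval, dist (h s) (h t) ≤ C * |(s : ℝ) - (t : ℝ)|) :
    curveELength h ≤ ENNReal.ofReal C := by
  have hC : 0 ≤ C := le_trans dist_nonneg (by simpa using hl 1 0)
  set f : ℝ → Y := fun x => h (Set.projIcc 0 1 zero_le_one x) with hf_def
  have hf : LipschitzOnWith C.toNNReal f (Set.Icc 0 1) := by
    intro x hx y hy
    rw [edist_dist, edist_dist, Real.dist_eq, ← ENNReal.ofReal_coe_nnreal,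
      Real.coe_toNNReal _ hC, ← ENNReal.ofReal_mul hC]
    apply ENNReal.ofReal_le_ofReal
    have e1 : f x = h ⟨x, hx⟩ := by rw [hf_def]; simp [Set.projIcc_of_mem zero_le_one hx]
    have e2 : f y = h ⟨y, hy⟩ := by rw [hf_def]; simp [Set.projIcc_of_mem zero_le_one hy]
    rw [e1, e2]
    exact hl ⟨x, hx⟩ ⟨y, hy⟩
  have h1 : h = f ∘ Subtype.val := by
    funext x
    simp only [hf_def, Function.comp_apply, Set.projIcc_val]
  have hmaps : Set.MapsTo (Subtype.val : unitInterval → ℝ) Set.univ (Set.Icc 0 1) :=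
    fun x _ => x.2
  have hvar : eVariationOn (Subtype.val : unitInterval → ℝ) Set.univ ≤ 1 := by
    have hmono : MonotoneOn (Subtype.val : unitInterval → ℝ) Set.univ :=
      fun x _ y _ hxy => hxy
    have huniv : (Set.univ : Set unitInterval) ∩ Set.Icc 0 1 = Set.univ := by
      ext x
      simp only [Set.mem_inter_iff, Set.mem_univ, true_and, Set.mem_Icc, iff_true]
      exact ⟨x.2.1, x.2.2⟩
    have := hmono.eVariationOn_le (Set.mem_univ 0) (Set.mem_univ 1)
    rw [huniv] at this
    simpa using this
  calc curveELength h = eVariationOn (f ∘ Subtype.val) Set.univ := by rw [curveELength, h1]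
    _ ≤ C.toNNReal * eVariationOn (Subtype.val : unitInterval → ℝ) Set.univ :=
        hf.comp_eVariationOn_le hmaps
    _ ≤ C.toNNReal * 1 := mul_le_mul_right hvar _
    _ = ENNReal.ofReal C := by rw [mul_one, ENNReal.ofReal]

private lemma aux_edist_le_curveELength {Y : Type*} [MetricSpace Y] (h : unitInterval → Y) :
    edist (h 0) (h 1) ≤ curveELength h :=
  eVariationOn.edist_le h (Set.mem_univ 0) (Set.mem_univ 1)

end AuxLemmas

/-- the ruled map between two rectifiable curves in a CAT(κ) space is
length-minimizing relative to the boundary of the square. -/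

theorem ruled_map_lengthMinimizing {Y : Type*} [MetricSpace Y] (κ : ℝ)
    (hY : IsCATSpace κ Y) (η₀ η₁ : unitInterval → Y)
    (hη₀ : Continuous η₀) (hη₁ : Continuous η₁)
    (hr₀ : curveELength η₀ ≠ ⊤) (hr₁ : curveELength η₁ ≠ ⊤)
    (hd : ∀ a : unitInterval, ENNReal.ofReal (dist (η₀ a) (η₁ a)) < modelDiam κ)
    (F : unitInterval × unitInterval → Y)
    (hF0 : ∀ a : unitInterval, F (a, 0) = η₀ a)
    (hF1 : ∀ a : unitInterval, F (a, 1) = η₁ a)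
    (hgeo : ∀ a s t : unitInterval,
      dist (F (a, s)) (F (a, t)) = |(s : ℝ) - (t : ℝ)| * dist (η₀ a) (η₁ a)) :
    ∀ g : unitInterval × unitInterval → Y, Continuous g →
      Set.EqOn F g {p : unitInterval × unitInterval |
        p.1 = 0 ∨ p.1 = 1 ∨ p.2 = 0 ∨ p.2 = 1} →
      IsShorter F g → g = F := by
  intro g hg hEq hsh
  funext p
  obtain ⟨a, t⟩ := p
  set D := dist (η₀ a) (η₁ a) with hD_def
  have hDnn : 0 ≤ D := dist_nonneg
  have hg0 : g (a, 0) = η₀ a := by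
    rw [← hEq (by simp : ((a, 0) : unitInterval × unitInterval) ∈ _), hF0]
  have hg1 : g (a, 1) = η₁ a := by
    rw [← hEq (by simp : ((a, 1) : unitInterval × unitInterval) ∈ _), hF1]
  -- Step A: segment length bound for g along the vertical fiber
  have hseg : ∀ t₁ t₂ : unitInterval, (t₁ : ℝ) ≤ (t₂ : ℝ) →
      edist (g (a, t₁)) (g (a, t₂)) ≤ ENNReal.ofReal (((t₂ : ℝ) - (t₁ : ℝ)) * D) := by
    intro t₁ t₂ h12
    have hmem : ∀ s : unitInterval, (t₁ : ℝ) + s * ((t₂ : ℝ) - t₁) ∈ Set.Icc (0 : ℝ) 1 := by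
      intro s
      constructor
      · have : 0 ≤ (s : ℝ) * ((t₂ : ℝ) - t₁) := mul_nonneg s.2.1 (by linarith)
        have := t₁.2.1; linarith
      · have h1 : (s : ℝ) * ((t₂ : ℝ) - t₁) ≤ (t₂ : ℝ) - t₁ := by
          nlinarith [s.2.2, s.2.1]
        have := t₂.2.2; linarith
    set sg : unitInterval → unitInterval :=
      fun s => Set.projIcc 0 1 zero_le_one ((t₁ : ℝ) + s * ((t₂ : ℝ) - t₁)) with hsg
    have hsgval : ∀ s : unitInterval, ((sg s : ℝ)) = (t₁ : ℝ) + s * ((t₂ : ℝ) - t₁) := by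
      intro s; rw [hsg]; simp [Set.projIcc_of_mem zero_le_one (hmem s)]
    have hsgcont : Continuous sg := by
      apply continuous_projIcc.comp
      fun_prop
    set c : C(unitInterval, unitInterval × unitInterval) :=
      ⟨fun s => (a, sg s), continuous_const.prodMk hsgcont⟩ with hc
    have hc0 : c 0 = (a, t₁) := by
      have h0 : sg 0 = t₁ := Subtype.ext (by rw [hsgval]; simp)
      simp [hc, h0]
    have hc1 : c 1 = (a, t₂) := by
      have h0 : sg 1 = t₂ := Subtype.ext (by rw [hsgval]; simp)
      simp [hc, h0]
    calc edist (g (a, t₁)) (g (a, t₂))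
        = edist ((fun s => g (c s)) 0) ((fun s => g (c s)) 1) := by
          simp only [hc0, hc1]
      _ ≤ curveELength (fun s => g (c s)) := aux_edist_le_curveELength _
      _ ≤ curveELength (fun s => F (c s)) := hsh c
      _ ≤ ENNReal.ofReal (((t₂ : ℝ) - (t₁ : ℝ)) * D) := by
          apply aux_curveELength_le
          intro s s'
          have e : dist (F (c s)) (F (c s')) = |(sg s : ℝ) - (sg s' : ℝ)| * D := hgeo a (sg s) (sg s')
          rw [e, hsgval, hsgval,
            show (t₁ : ℝ) + s * ((t₂ : ℝ) - t₁) - ((t₁ : ℝ) + s' * ((t₂ : ℝ) - t₁))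
              = ((s : ℝ) - s') * ((t₂ : ℝ) - t₁) by ring,
            abs_mul, abs_of_nonneg (sub_nonneg.2 h12)]
          exact le_of_eq (by ring)
  -- Step B: pin down the distances
  have h01 : edist (g (a, 0)) (g (a, t)) ≤ ENNReal.ofReal ((t : ℝ) * D) := by
    have := hseg 0 t t.2.1
    simpa using this
  have h02 : edist (g (a, t)) (g (a, 1)) ≤ ENNReal.ofReal ((1 - (t : ℝ)) * D) := by
    have := hseg t 1 t.2.2
    simpa using this
  have htri : ENNReal.ofReal D ≤ edist (g (a, 0)) (g (a, t)) + edist (g (a, t)) (g (a, 1)) := by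
    have : ENNReal.ofReal D = edist (g (a, 0)) (g (a, 1)) := by
      rw [hg0, hg1, edist_dist]
    rw [this]
    exact edist_triangle _ _ _
  have hsum : ENNReal.ofReal ((t : ℝ) * D) + ENNReal.ofReal ((1 - (t : ℝ)) * D)
      = ENNReal.ofReal D := by
    rw [← ENNReal.ofReal_add (mul_nonneg t.2.1 hDnn)
      (mul_nonneg (by have := t.2.2; linarith) hDnn)]
    ring_nf
  have he1 : edist (g (a, 0)) (g (a, t)) = ENNReal.ofReal ((t : ℝ) * D) := by
    refine le_antisymm h01 ?_
    by_contra hlt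
    push_neg at hlt
    have hfin : edist (g (a, t)) (g (a, 1)) ≠ ⊤ :=
      ne_top_of_le_ne_top ENNReal.ofReal_ne_top h02
    have : edist (g (a, 0)) (g (a, t)) + edist (g (a, t)) (g (a, 1))
        < ENNReal.ofReal ((t : ℝ) * D) + ENNReal.ofReal ((1 - (t : ℝ)) * D) :=
      ENNReal.add_lt_add_of_lt_of_le hfin hlt h02
    rw [hsum] at this
    exact absurd htri (not_le.2 this)
  have he2 : edist (g (a, t)) (g (a, 1)) = ENNReal.ofReal ((1 - (t : ℝ)) * D) := by
    refine le_antisymm h02 ?_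
    by_contra hlt
    push_neg at hlt
    have h' : edist (g (a, 0)) (g (a, t)) + edist (g (a, t)) (g (a, 1))
        < ENNReal.ofReal ((t : ℝ) * D) + ENNReal.ofReal ((1 - (t : ℝ)) * D) :=
      calc edist (g (a, 0)) (g (a, t)) + edist (g (a, t)) (g (a, 1))
          ≤ ENNReal.ofReal ((t : ℝ) * D) + edist (g (a, t)) (g (a, 1)) :=
            add_le_add_left h01 _
        _ < ENNReal.ofReal ((t : ℝ) * D) + ENNReal.ofReal ((1 - (t : ℝ)) * D) :=
            ENNReal.add_lt_add_left ENNReal.ofReal_ne_top hlt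
    rw [hsum] at h'
    exact absurd htri (not_le.2 h')
  have hd1 : dist (η₀ a) (g (a, t)) = (t : ℝ) * D := by
    have := he1
    rw [hg0] at this
    rw [edist_dist] at this
    exact (ENNReal.ofReal_eq_ofReal_iff dist_nonneg (mul_nonneg t.2.1 hDnn)).1 this
  have hd2 : dist (g (a, t)) (η₁ a) = (1 - (t : ℝ)) * D := by
    have := he2
    rw [hg1] at this
    rw [edist_dist] at this
    exact (ENNReal.ofReal_eq_ofReal_iff dist_nonneg
      (mul_nonneg (by have := t.2.2; linarith) hDnn)).1 this
  -- trivial cases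
  by_cases hD0 : D = 0
  · have hgη : g (a, t) = η₀ a := by
      rw [← dist_eq_zero, dist_comm]
      rw [hd1, hD0, mul_zero]
    have hFη : F (a, t) = η₀ a := by
      rw [← dist_eq_zero, ← hF0 a, hgeo a t 0]
      simp [hD_def.symm ▸ hD0]
    rw [hgη, hFη]
  by_cases ht0 : t = 0
  · subst ht0
    exact (hEq (by simp : ((a, 0) : unitInterval × unitInterval) ∈ _)).symm
  by_cases ht1 : t = 1
  · subst ht1
    exact (hEq (by simp : ((a, 1) : unitInterval × unitInterval) ∈ _)).symm
  -- main case: 0 < t < 1, D > 0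
  have hDpos : 0 < D := lt_of_le_of_ne hDnn (Ne.symm hD0)
  have ht0' : 0 < (t : ℝ) :=
    lt_of_le_of_ne t.2.1 (fun h => ht0 (Subtype.ext h.symm))
  have ht1' : (t : ℝ) < 1 :=
    lt_of_le_of_ne t.2.2 (fun h => ht1 (Subtype.ext h))
  obtain ⟨_, _, hcat⟩ := hY
  -- the geodesic parametrization along the fiber
  set γ : ℝ → Y := fun s => F (a, Set.projIcc 0 1 zero_le_one (s / D)) with hγ
  have hdpq : dist (η₀ a) (η₁ a) = D := rfl
  have hγgeo : IsGeodesicParam γ (η₀ a) (η₁ a) := by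
    refine ⟨?_, ?_, ?_⟩
    · rw [hγ]
      simp only [zero_div]
      rw [show Set.projIcc (0:ℝ) 1 zero_le_one 0 = (0 : unitInterval) from
        Set.projIcc_val zero_le_one 0]
      exact hF0 a
    · rw [hdpq, hγ]
      simp only [div_self hD0]
      rw [show Set.projIcc (0:ℝ) 1 zero_le_one 1 = (1 : unitInterval) from
        Set.projIcc_val zero_le_one 1]
      exact hF1 a
    · rw [hdpq]
      intro s hs s' hs'
      have hms : s / D ∈ Set.Icc (0 : ℝ) 1 := ⟨div_nonneg hs.1 hDnn, (div_le_one hDpos).2 hs.2⟩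
      have hms' : s' / D ∈ Set.Icc (0 : ℝ) 1 :=
        ⟨div_nonneg hs'.1 hDnn, (div_le_one hDpos).2 hs'.2⟩
      rw [hγ]
      simp only
      rw [Set.projIcc_of_mem zero_le_one hms, Set.projIcc_of_mem zero_le_one hms',
        hgeo a ⟨s / D, hms⟩ ⟨s' / D, hms'⟩]
      show |s / D - s' / D| * D = |s - s'|
      rw [div_sub_div_same, abs_div, abs_of_pos hDpos, div_mul_cancel₀ _ (ne_of_gt hDpos)]
  have hsqκ : 0 < κ → Real.sqrt κ * D < Real.pi := by
    intro hκpos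
    have hda := hd a
    rw [modelDiam, if_neg (not_le.2 hκpos)] at hda
    have hsκ : 0 < Real.sqrt κ := Real.sqrt_pos.2 hκpos
    have hπ : 0 < Real.pi / Real.sqrt κ := div_pos Real.pi_pos hsκ
    have hDlt : D < Real.pi / Real.sqrt κ := (ENNReal.ofReal_lt_ofReal_iff hπ).1 hda
    calc Real.sqrt κ * D = D * Real.sqrt κ := mul_comm _ _
      _ < Real.pi := (lt_div_iff₀ hsκ).1 hDlt
  have hperim : ENNReal.ofReal (dist (η₀ a) (η₁ a) + dist (η₁ a) (g (a, t))
      + dist (g (a, t)) (η₀ a)) < 2 * modelDiam κ := by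
    have hsum2 : dist (η₀ a) (η₁ a) + dist (η₁ a) (g (a, t)) + dist (g (a, t)) (η₀ a)
        = 2 * D := by
      rw [hdpq, dist_comm (η₁ a) (g (a, t)), hd2, dist_comm (g (a, t)) (η₀ a), hd1]
      ring
    rw [hsum2]
    rcases le_or_gt κ 0 with hκ | hκ
    · rw [modelDiam, if_pos hκ, ENNReal.mul_top (by norm_num : (2 : ℝ≥0∞) ≠ 0)]
      exact ENNReal.ofReal_lt_top
    · rw [modelDiam, if_neg (not_le.2 hκ)]
      have hsκ : 0 < Real.sqrt κ := Real.sqrt_pos.2 hκ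
      have hπ : 0 < Real.pi / Real.sqrt κ := div_pos Real.pi_pos hsκ
      have hda := hd a
      rw [modelDiam, if_neg (not_le.2 hκ)] at hda
      have hDlt : D < Real.pi / Real.sqrt κ := (ENNReal.ofReal_lt_ofReal_iff hπ).1 hda
      rw [show (2 : ℝ≥0∞) * ENNReal.ofReal (Real.pi / Real.sqrt κ)
          = ENNReal.ofReal (2 * (Real.pi / Real.sqrt κ)) by
        rw [ENNReal.ofReal_mul (by norm_num : (0:ℝ) ≤ 2), ENNReal.ofReal_ofNat]]
      exact (ENNReal.ofReal_lt_ofReal_iff (by positivity)).2 (by linarith)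
  have hmemtd : (t : ℝ) * D ∈ Set.Icc (0 : ℝ) (dist (η₀ a) (η₁ a)) := by
    rw [hdpq]
    exact ⟨mul_nonneg t.2.1 hDnn, by nlinarith⟩
  have hkey := hcat (η₀ a) (η₁ a) (g (a, t)) γ hγgeo hperim ((t : ℝ) * D) hmemtd
  have hγt : γ ((t : ℝ) * D) = F (a, t) := by
    rw [hγ]
    simp only
    rw [show (t : ℝ) * D / D = (t : ℝ) by field_simp, Set.projIcc_val zero_le_one t]
  rw [hγt, hdpq, hd1, dist_comm (η₁ a) (g (a, t)), hd2,
    aux_cosAngle_deg κ D (t : ℝ) hDpos ht0' ht1' hsqκ, aux_sideLength_self] at hkey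
  exact (dist_le_zero.1 hkey).symm
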